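/- Let μ be a shift-invariant Markov random field on A^{Z^d} whose support satisfies topological strong spatial mixing with gap g. Then c_μ := inf{ μ(x(0) | x(S)) : x ∈ supp(μ), S a finite subset of Z^d \ {0} } is strictly positive; in fact c_μ ≥ D_μ(B_g) · |A|^{-2d(2g+1)^{d-1}}, where D_μ(B_g) is the minimum over subsets W of the g-block B_g, boundary conditions δ on ∂W of positive measure, and configurations w on W with μ(w|δ) > 0, of μ(w|δ). -/

import Mathlib

open MeasureTheory

abbrev Site (d : ℕ) := Fin d → ℤ

def dist1 {d : ℕ} (p q : Site d) : ℕ := ∑ i, (p i - q i).natAbs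

/-- Outer boundary of a set of sites. -/
def bd {d : ℕ} (S : Set (Site d)) : Set (Site d) :=
  {p | p ∉ S ∧ ∃ q ∈ S, dist1 p q = 1}

/-- Cylinder set: points agreeing with `u` on `S`. -/
def cyl {d : ℕ} {A : Type*} (S : Set (Site d)) (u : Site d → A) : Set (Site d → A) :=
  {x | ∀ p ∈ S, x p = u p}

noncomputable def condR {d : ℕ} {A : Type*} [MeasurableSpace A]
    (μ : Measure (Site d → A)) (E B : Set (Site d → A)) : ℝ :=
  (μ (E ∩ B) / μ B).toReal

def ShiftInvariant {d : ℕ} {A : Type*} [MeasurableSpace A]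
    (μ : Measure (Site d → A)) : Prop :=
  ∀ (t : Site d) (E : Set (Site d → A)),
    μ ((fun (x : Site d → A) (q : Site d) => x (q + t)) ⁻¹' E) = μ E

/-- Markov random field property. -/
def IsMRF {d : ℕ} {A : Type*} [MeasurableSpace A] (μ : Measure (Site d → A)) : Prop :=
  ∀ S : Set (Site d), S.Finite → ∀ u : Site d → A,
    ∀ T : Set (Site d), T.Finite → bd S ⊆ T → Disjoint S T →
    ∀ δ : Site d → A, 0 < μ (cyl T δ) →
      condR μ (cyl S u) (cyl T δ) = condR μ (cyl S u) (cyl (bd S) δ)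

/-- The support of `μ`: points all of whose cylinder sets have positive measure. -/
def mrfSupport {d : ℕ} {A : Type*} [MeasurableSpace A]
    (μ : Measure (Site d → A)) : Set (Site d → A) :=
  {x | ∀ S : Set (Site d), S.Finite → 0 < μ (cyl S x)}

def TSSM {d : ℕ} {A : Type*} (X : Set (Site d → A)) (g : ℕ) : Prop :=
  ∀ U S V : Set (Site d), U.Finite → S.Finite → V.Finite →
    Disjoint U S → Disjoint S V → Disjoint U V →
    (∀ p ∈ U, ∀ q ∈ V, g ≤ dist1 p q) →
    ∀ u s v : Site d → A,
      (∃ x ∈ X, (∀ p ∈ U, x p = u p) ∧ (∀ p ∈ S, x p = s p)) →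
      (∃ x ∈ X, (∀ p ∈ S, x p = s p) ∧ (∀ p ∈ V, x p = v p)) →
      ∃ x ∈ X, (∀ p ∈ U, x p = u p) ∧ (∀ p ∈ S, x p = s p) ∧ ∀ p ∈ V, x p = v p

/-- The `g`-block `B_g = {p : |p_i| ≤ g for all i}`. -/
def Bblock (d g : ℕ) : Set (Site d) := {p | ∀ i, (p i).natAbs ≤ g}

/-- `D_μ(B_g)`: the infimum of `μ(w | δ)` over subsets `W ⊆ B_g`, boundary conditions `δ`
on `∂W` of positive measure, and configurations `w` on `W` with `μ(w | δ) > 0`. -/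
noncomputable def Dmu {d : ℕ} {A : Type*} [MeasurableSpace A]
    (μ : Measure (Site d → A)) (g : ℕ) : ℝ :=
  sInf {r : ℝ | ∃ W : Set (Site d), W ⊆ Bblock d g ∧
    ∃ δ : Site d → A, 0 < μ (cyl (bd W) δ) ∧
    ∃ w : Site d → A, 0 < condR μ (cyl W w) (cyl (bd W) δ) ∧
      r = condR μ (cyl W w) (cyl (bd W) δ)}

section Helpers

open Set

variable {d : ℕ} {A : Type*}

lemma cyl_mono {S T : Set (Site d)} (h : S ⊆ T) (u : Site d → A) : cyl T u ⊆ cyl S u :=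
  fun _ hx p hp => hx p (h hp)

lemma cyl_union (S T : Set (Site d)) (u : Site d → A) :
    cyl (S ∪ T) u = cyl S u ∩ cyl T u := by
  ext y; constructor
  · intro hy; exact ⟨fun p hp => hy p (Or.inl hp), fun p hp => hy p (Or.inr hp)⟩
  · rintro ⟨h1, h2⟩ p (hp | hp); exacts [h1 p hp, h2 p hp]

lemma cyl_congr {S : Set (Site d)} {u v : Site d → A} (h : ∀ p ∈ S, u p = v p) :
    cyl S u = cyl S v := by
  ext y; constructor <;> intro hy p hp
  · rw [hy p hp, h p hp]
  · rw [hy p hp, h p hp]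

lemma cyl_empty (u : Site d → A) : cyl (∅ : Set (Site d)) u = Set.univ := by
  ext y; simp [cyl]

lemma Bblock_finite (d g : ℕ) : (Bblock d g).Finite := by
  have : Bblock d g ⊆ Set.pi Set.univ (fun _ : Fin d => Set.Icc (-(g:ℤ)) g) := by
    intro p hp i _
    have := hp i
    simp only [Set.mem_Icc]
    omega
  exact (Set.Finite.pi (fun i => Set.finite_Icc _ _)).subset this

lemma bd_subset_ball {g : ℕ} {W : Set (Site d)} (hW : W ⊆ Bblock d g) :
    bd W ⊆ Bblock d (g + 1) := by
  rintro p ⟨hpW, q, hqW, hdq⟩ i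
  have h1 : (p i - q i).natAbs ≤ 1 := by
    have : (p i - q i).natAbs ≤ dist1 p q := Finset.single_le_sum (f := fun i => (p i - q i).natAbs) (fun _ _ => Nat.zero_le _) (Finset.mem_univ i)
    omega
  have h2 := hW hqW i
  omega

lemma bd_Bblock_finite (d g : ℕ) : (bd (Bblock d g)).Finite :=
  (Bblock_finite d (g+1)).subset (bd_subset_ball subset_rfl)

lemma exists_one_coord {p q : Site d} (h : dist1 p q = 1) :
    ∃ i, (p i - q i).natAbs = 1 ∧ ∀ j, j ≠ i → p j = q j := by
  classical
  unfold dist1 at h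
  have hex : ∃ i ∈ Finset.univ, (p i - q i).natAbs ≠ 0 := by
    by_contra hc
    push_neg at hc
    have : ∑ i, (p i - q i).natAbs = 0 := Finset.sum_eq_zero (fun i hi => hc i hi)
    omega
  obtain ⟨i, _, hi⟩ := hex
  refine ⟨i, ?_, ?_⟩
  · have hle : (p i - q i).natAbs ≤ ∑ j, (p j - q j).natAbs :=
      Finset.single_le_sum (f := fun i => (p i - q i).natAbs) (fun _ _ => Nat.zero_le _) (Finset.mem_univ i)
    omega
  · intro j hj
    have hsum : (p i - q i).natAbs + ∑ j ∈ Finset.univ.erase i, (p j - q j).natAbs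
        = ∑ j, (p j - q j).natAbs :=
      Finset.add_sum_erase Finset.univ (fun i => (p i - q i).natAbs) (Finset.mem_univ i)
    have hj0 : (p j - q j).natAbs = 0 := by
      have hjmem : j ∈ Finset.univ.erase i := Finset.mem_erase.2 ⟨hj, Finset.mem_univ j⟩
      have hle : (p j - q j).natAbs ≤ ∑ j ∈ Finset.univ.erase i, (p j - q j).natAbs :=
        Finset.single_le_sum (f := fun i => (p i - q i).natAbs) (fun _ _ => Nat.zero_le _) hjmem
      have hi1 : 1 ≤ (p i - q i).natAbs := Nat.one_le_iff_ne_zero.2 hi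
      omega
    omega

end Helpers
section Counting

variable {d : ℕ}

lemma card_bd_Bblock (d g : ℕ) : (bd (Bblock d g)).ncard ≤ 2 * d * (2 * g + 1) ^ (d - 1) := by
  classical
  set E : Fin d × Bool → Set (Site d) := fun ib =>
    {p | p ib.1 = (if ib.2 then ((g:ℤ)+1) else -((g:ℤ)+1)) ∧ ∀ j, j ≠ ib.1 → (p j).natAbs ≤ g}
    with hE
  have hEfin : ∀ ib, (E ib).Finite := by
    intro ib
    have hsub : E ib ⊆ Set.pi Set.univ (fun _ : Fin d => Set.Icc (-(g:ℤ)-1) ((g:ℤ)+1)) := by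
      rintro p ⟨h1, h2⟩ j _
      simp only [Set.mem_Icc]
      by_cases hj : j = ib.1
      · subst hj; cases ib.2 <;> simp_all <;> omega
      · have := h2 j hj; omega
    exact (Set.Finite.pi (fun i => Set.finite_Icc _ _)).subset hsub
  have hcov : bd (Bblock d g) ⊆ ⋃ ib, E ib := by
    rintro p ⟨hpB, q, hqB, hdq⟩
    obtain ⟨i0, hi1, hall⟩ := exists_one_coord hdq
    have hpB' : ∃ i, ¬ (p i).natAbs ≤ g := by
      by_contra hc; push_neg at hc; exact hpB (fun i => hc i)
    obtain ⟨i, hi⟩ := hpB'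
    have hii : i = i0 := by
      by_contra hne
      exact hi ((hall i hne) ▸ hqB i)
    subst hii
    have hq := hqB i
    have habs : (p i).natAbs = g + 1 := by omega
    have hmem : ∀ j, j ≠ i → (p j).natAbs ≤ g := fun j hj => (hall j hj) ▸ hqB j
    rcases Int.natAbs_eq (p i) with hs | hs
    · exact Set.mem_iUnion.2 ⟨(i, true), by simp only [hE, Set.mem_setOf_eq, if_pos]; exact ⟨by omega, hmem⟩⟩
    · exact Set.mem_iUnion.2 ⟨(i, false), by simp only [hE, Set.mem_setOf_eq]; exact ⟨by simp; omega, hmem⟩⟩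
  have hcard : ∀ ib, (E ib).ncard ≤ (2 * g + 1) ^ (d - 1) := by
    intro ib
    have hinj : ∃ f : (E ib) → ({j : Fin d // j ≠ ib.1} → Fin (2 * g + 1)),
        Function.Injective f := by
      refine ⟨fun p j => ⟨((p.1 j.1) + g).toNat, ?_⟩, ?_⟩
      · have := p.2.2 j.1 j.2; omega
      · rintro ⟨p, hp⟩ ⟨p', hp'⟩ hpp
        apply Subtype.ext
        show p = p'
        funext j
        by_cases hj : j = ib.1
        · subst hj; rw [hp.1, hp'.1]
        · have hto : ((p j + (g:ℤ)).toNat) = ((p' j + (g:ℤ)).toNat) :=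
            congrArg Fin.val (congrFun hpp ⟨j, hj⟩)
          have h1 := hp.2 j hj
          have h2 := hp'.2 j hj
          omega
    obtain ⟨f, hf⟩ := hinj
    have h1 : (E ib).ncard ≤ Nat.card ({j : Fin d // j ≠ ib.1} → Fin (2 * g + 1)) :=
      Nat.card_le_card_of_injective f hf
    have h2 : Nat.card ({j : Fin d // j ≠ ib.1} → Fin (2 * g + 1)) = (2 * g + 1) ^ (d - 1) := by
      rw [Nat.card_eq_fintype_card, Fintype.card_fun]
      congr 1
      · simp
      · simp [Fintype.card_subtype_compl]
    omega
  have hfin := bd_Bblock_finite d g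
  rw [Set.ncard_eq_toFinset_card _ hfin]
  have hsub : hfin.toFinset ⊆ Finset.univ.biUnion (fun ib => (hEfin ib).toFinset) := by
    intro p hp
    rw [Set.Finite.mem_toFinset] at hp
    obtain ⟨s, ⟨ib, rfl⟩, hmem⟩ := hcov hp
    exact Finset.mem_biUnion.2 ⟨ib, Finset.mem_univ _, (hEfin ib).mem_toFinset.2 hmem⟩
  calc hfin.toFinset.card ≤ (Finset.univ.biUnion (fun ib => (hEfin ib).toFinset)).card :=
        Finset.card_le_card hsub
    _ ≤ ∑ ib : Fin d × Bool, (hEfin ib).toFinset.card := Finset.card_biUnion_le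
    _ ≤ ∑ _ib : Fin d × Bool, (2 * g + 1) ^ (d - 1) := by
        refine Finset.sum_le_sum (fun ib _ => ?_)
        rw [← Set.ncard_eq_toFinset_card _ (hEfin ib)]
        exact hcard ib
    _ = 2 * d * (2 * g + 1) ^ (d - 1) := by
        simp [Finset.sum_const, Finset.card_univ]
        ring

end Counting
section Extension

variable {d : ℕ} {A : Type*} [Fintype A] [MeasurableSpace A]

lemma step_ext (μ : Measure (Site d → A)) {G : Set (Site d)} {f : Site d → A}
    (h : 0 < μ (cyl G f)) (p : Site d) :
    ∃ a : A, 0 < μ (cyl (insert p G) (Function.update f p a)) := by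
  classical
  have hsub : cyl G f ⊆ ⋃ a : A, cyl (insert p G) (Function.update f p a) := by
    intro y hy
    refine Set.mem_iUnion.2 ⟨y p, ?_⟩
    intro q hq
    rcases Set.mem_insert_iff.1 hq with rfl | hqG
    · rw [Function.update_self]
    · by_cases hqp : q = p
      · subst hqp; rw [Function.update_self]
      · rw [Function.update_of_ne hqp]; exact hy q hqG
  by_contra hc
  push_neg at hc
  have hle : μ (cyl G f) ≤ ∑' a : A, μ (cyl (insert p G) (Function.update f p a)) :=
    (measure_mono hsub).trans (measure_iUnion_le _)
  have hz : ∀ a : A, μ (cyl (insert p G) (Function.update f p a)) = 0 := fun a =>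
    le_antisymm (hc a) zero_le
  have : μ (cyl G f) ≤ 0 := hle.trans (by simp [hz])
  exact absurd (le_antisymm this zero_le) h.ne'

lemma union_image_Iio_succ (e : ℕ → Site d) (F : Set (Site d)) (n : ℕ) :
    F ∪ e '' Set.Iio (n + 1) = insert (e n) (F ∪ e '' Set.Iio n) := by
  rw [show Set.Iio (n + 1) = insert n (Set.Iio n) by
      ext k; simp only [Set.mem_Iio, Set.mem_insert_iff]; omega,
    Set.image_insert_eq, Set.union_insert]

open Classical in
noncomputable def extSeq (μ : Measure (Site d → A)) (e : ℕ → Site d)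
    {F : Set (Site d)} {δ : Site d → A} (h : 0 < μ (cyl F δ)) :
    ∀ n : ℕ, {f : Site d → A // 0 < μ (cyl (F ∪ e '' Set.Iio n) f)}
  | 0 => ⟨δ, by
      have he0 : F ∪ e '' Set.Iio (0 : ℕ) = F := by ext q; simp
      rwa [he0]⟩
  | (n + 1) =>
    let prev := extSeq μ e h n
    if hmem : e n ∈ F ∪ e '' Set.Iio n then
      ⟨prev.1, by rw [union_image_Iio_succ, Set.insert_eq_self.2 hmem]; exact prev.2⟩
    else
      ⟨Function.update prev.1 (e n) (step_ext μ prev.2 (e n)).choose, by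
        rw [union_image_Iio_succ]; exact (step_ext μ prev.2 (e n)).choose_spec⟩

lemma extSeq_stable (μ : Measure (Site d → A)) (e : ℕ → Site d)
    {F : Set (Site d)} {δ : Site d → A} (h : 0 < μ (cyl F δ)) :
    ∀ m n, n ≤ m → ∀ p ∈ F ∪ e '' Set.Iio n,
      (extSeq μ e h m).1 p = (extSeq μ e h n).1 p := by
  intro m
  induction m with
  | zero =>
    intro n hn p _
    obtain rfl : n = 0 := Nat.le_zero.1 hn
    rfl
  | succ m ih =>
    intro n hn p hp
    by_cases hnm : n = m + 1
    · subst hnm; rfl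
    · have hn' : n ≤ m := by omega
      have hpm : p ∈ F ∪ e '' Set.Iio m := by
        rcases hp with hp | ⟨k, hk, rfl⟩
        · exact Or.inl hp
        · exact Or.inr ⟨k, by simp only [Set.mem_Iio] at hk ⊢; omega, rfl⟩
      rw [← ih n hn' p hp]
      show (extSeq μ e h (m + 1)).1 p = (extSeq μ e h m).1 p
      simp only [extSeq]
      split
      · rfl
      · next hmem =>
        have hne : p ≠ e m := fun hq => hmem (hq ▸ hpm)
        exact Function.update_of_ne hne _ _

lemma exists_support_ext (μ : Measure (Site d → A)) [IsProbabilityMeasure μ]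
    {F : Set (Site d)} {δ : Site d → A} (h : 0 < μ (cyl F δ)) :
    ∃ z ∈ mrfSupport μ, ∀ p ∈ F, z p = δ p := by
  classical
  obtain ⟨e, he⟩ := exists_surjective_nat (Site d)
  let z : Site d → A := fun p => (extSeq μ e h ((he p).choose + 1)).1 p
  have hz : ∀ n p, p ∈ F ∪ e '' Set.Iio n → z p = (extSeq μ e h n).1 p := by
    intro n p hp
    have hmem2 : p ∈ F ∪ e '' Set.Iio ((he p).choose + 1) :=
      Or.inr ⟨(he p).choose, by simp, (he p).choose_spec⟩
    have h1 := extSeq_stable μ e h (max n ((he p).choose + 1)) n (le_max_left _ _) p hp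
    have h2 := extSeq_stable μ e h (max n ((he p).choose + 1)) ((he p).choose + 1)
      (le_max_right _ _) p hmem2
    show (extSeq μ e h ((he p).choose + 1)).1 p = _
    rw [← h2, h1]
  refine ⟨z, ?_, ?_⟩
  · intro S hS
    let M : ℕ := hS.toFinset.sup (fun p => (he p).choose) + 1
    have hSsub : S ⊆ e '' Set.Iio M := by
      intro p hp
      refine ⟨(he p).choose, ?_, (he p).choose_spec⟩
      have hle : (he p).choose ≤ hS.toFinset.sup (fun p => (he p).choose) :=
        Finset.le_sup (f := fun p => (he p).choose) (hS.mem_toFinset.2 hp)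
      simp only [Set.mem_Iio, M]
      omega
    have hpos := (extSeq μ e h M).2
    have hagree : cyl (F ∪ e '' Set.Iio M) ((extSeq μ e h M).1) = cyl (F ∪ e '' Set.Iio M) z :=
      cyl_congr (fun p hp => (hz M p hp).symm)
    have hpos2 : 0 < μ (cyl (F ∪ e '' Set.Iio M) z) := hagree ▸ hpos
    exact hpos2.trans_le (measure_mono (cyl_mono (fun p hp => Or.inr (hSsub hp)) z))
  · intro p hp
    have := hz 0 p (Or.inl hp)
    rw [this]
    rfl

end Extension
open scoped ENNReal

section Measure2

variable {d : ℕ} {A : Type*} [Fintype A] [MeasurableSpace A]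

lemma exists_max_config (μ : Measure (Site d → A)) [Nonempty A]
    {C : Set (Site d)} (hC : C.Finite) (S : Set (Site d)) (x : Site d → A) :
    ∃ η : Site d → A,
      μ (cyl S x) ≤ (Fintype.card A : ℝ≥0∞) ^ C.ncard * μ (cyl S x ∩ cyl C η) := by
  classical
  set C' := hC.toFinset with hC'
  let ext : (C' → A) → Site d → A := fun f p =>
    if h : p ∈ C' then f ⟨p, h⟩ else Classical.arbitrary A
  have hcov : cyl S x ⊆ ⋃ f : (C' → A), (cyl S x ∩ cyl C (ext f)) := by
    intro y hy
    refine Set.mem_iUnion.2 ⟨fun q => y q.1, hy, ?_⟩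
    intro p hp
    have hp' : p ∈ C' := hC.mem_toFinset.2 hp
    simp only [ext, dif_pos hp']
  have hle : μ (cyl S x) ≤ ∑' f : (C' → A), μ (cyl S x ∩ cyl C (ext f)) :=
    (measure_mono hcov).trans (measure_iUnion_le _)
  rw [tsum_fintype] at hle
  obtain ⟨f0, _, hf0⟩ := Finset.exists_max_image Finset.univ
    (fun f : (C' → A) => μ (cyl S x ∩ cyl C (ext f))) Finset.univ_nonempty
  refine ⟨ext f0, hle.trans ?_⟩
  calc ∑ f : (C' → A), μ (cyl S x ∩ cyl C (ext f))
      ≤ ∑ _f : (C' → A), μ (cyl S x ∩ cyl C (ext f0)) :=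
        Finset.sum_le_sum (fun f _ => hf0 f (Finset.mem_univ f))
    _ = (Fintype.card (C' → A) : ℝ≥0∞) * μ (cyl S x ∩ cyl C (ext f0)) := by
        rw [Finset.sum_const, Finset.card_univ, nsmul_eq_mul]
    _ = (Fintype.card A : ℝ≥0∞) ^ C.ncard * μ (cyl S x ∩ cyl C (ext f0)) := by
        congr 1
        rw [Fintype.card_fun, Fintype.card_coe, ← Set.ncard_eq_toFinset_card _ hC]
        push_cast
        ring

def DmuSet (μ : Measure (Site d → A)) (g : ℕ) : Set ℝ :=
  {r : ℝ | ∃ W : Set (Site d), W ⊆ Bblock d g ∧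
    ∃ δ : Site d → A, 0 < μ (cyl (bd W) δ) ∧
    ∃ w : Site d → A, 0 < condR μ (cyl W w) (cyl (bd W) δ) ∧
      r = condR μ (cyl W w) (cyl (bd W) δ)}

lemma Dmu_eq_sInf (μ : Measure (Site d → A)) (g : ℕ) : Dmu μ g = sInf (DmuSet μ g) := rfl

lemma Bblock_mono (d g : ℕ) : Bblock d g ⊆ Bblock d (g + 1) :=
  fun p hp i => le_trans (hp i) (Nat.le_succ g)

lemma DmuSet_finite [Nonempty A] (μ : Measure (Site d → A)) (g : ℕ) :
    (DmuSet μ g).Finite := by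
  classical
  have hB' := Bblock_finite d (g + 1)
  let z0 : Site d → A := fun _ => Classical.arbitrary A
  let NT := {f : Site d → A // ∀ p, p ∉ Bblock d (g + 1) → f p = z0 p}
  let norm : (Site d → A) → NT := fun f =>
    ⟨fun p => if p ∈ Bblock d (g + 1) then f p else z0 p, fun p hp => if_neg hp⟩
  have hfinN : Finite NT := by
    refine Finite.of_injective (fun f => (fun q : ↥hB'.toFinset => f.1 q.1)) ?_
    intro f f' hff
    apply Subtype.ext; funext p
    by_cases hp : p ∈ Bblock d (g + 1)
    · exact congrFun hff ⟨p, hB'.mem_toFinset.2 hp⟩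
    · rw [f.2 p hp, f'.2 p hp]
  have hfinW : Finite {W : Set (Site d) // W ⊆ Bblock d g} :=
    ((Bblock_finite d g).finite_subsets).to_subtype
  let m : {W : Set (Site d) // W ⊆ Bblock d g} × NT × NT → ℝ := fun t =>
    condR μ (cyl t.1.1 t.2.1.1) (cyl (bd t.1.1) t.2.2.1)
  have hsub : DmuSet μ g ⊆ Set.range m := by
    rintro r ⟨W, hWB, δ, hδ, w, hw, rfl⟩
    refine ⟨⟨⟨W, hWB⟩, norm w, norm δ⟩, ?_⟩
    show condR μ (cyl W (norm w).1) (cyl (bd W) (norm δ).1) = _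
    have h1 : cyl W (norm w).1 = cyl W w :=
      cyl_congr (fun p hp => if_pos (Bblock_mono d g (hWB hp)))
    have h2 : cyl (bd W) (norm δ).1 = cyl (bd W) δ :=
      cyl_congr (fun p hp => if_pos (bd_subset_ball hWB hp))
    rw [h1, h2]
  exact (Set.finite_range m).subset hsub

lemma one_mem_DmuSet [Nonempty A] (μ : Measure (Site d → A)) [IsProbabilityMeasure μ]
    (g : ℕ) : (1 : ℝ) ∈ DmuSet μ g := by
  have hbd : bd (∅ : Set (Site d)) = ∅ := by
    ext p; simp [bd]
  have hone : condR μ (cyl (∅ : Set (Site d)) (fun _ => Classical.arbitrary A))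
      (cyl (bd (∅ : Set (Site d))) (fun _ => Classical.arbitrary A)) = 1 := by
    rw [hbd, cyl_empty]
    simp [condR]
  refine ⟨∅, Set.empty_subset _, fun _ => Classical.arbitrary A, ?_,
    fun _ => Classical.arbitrary A, ?_, ?_⟩
  · rw [hbd, cyl_empty]; simp
  · rw [hone]; norm_num
  · rw [hone]

lemma Dmu_pos [Nonempty A] (μ : Measure (Site d → A)) [IsProbabilityMeasure μ] (g : ℕ) :
    0 < Dmu μ g := by
  have hfin := DmuSet_finite μ g
  have hne : (DmuSet μ g).Nonempty := ⟨1, one_mem_DmuSet μ g⟩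
  have hmem := hne.csInf_mem hfin
  obtain ⟨W, _, δ, _, w, hw, hr⟩ := hmem
  rw [Dmu_eq_sInf, hr]
  exact hw

lemma Dmu_le [Nonempty A] (μ : Measure (Site d → A)) {g : ℕ} {r : ℝ}
    (hr : r ∈ DmuSet μ g) : Dmu μ g ≤ r :=
  csInf_le (DmuSet_finite μ g).bddBelow hr

end Measure2
/-- If the support of a shift-invariant MRF satisfies TSSM with gap `g`, then the uniform
bound `c_μ` on conditional probabilities of a single site given any finite set not containing
it is at least `D_μ(B_g) · |A|^{-2d(2g+1)^{d-1}} > 0`. -/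
theorem tssm_implies_cmu_pos {d : ℕ} {A : Type*} [Fintype A] [MeasurableSpace A]
    (μ : Measure (Site d → A)) [IsProbabilityMeasure μ]
    (hinv : ShiftInvariant μ) (hmrf : IsMRF μ)
    (g : ℕ) (htssm : TSSM (mrfSupport μ) g) :
    0 < Dmu μ g * ((Fintype.card A : ℝ) ^ (2 * d * (2 * g + 1) ^ (d - 1)))⁻¹ ∧
    ∀ x ∈ mrfSupport μ, ∀ S : Set (Site d), S.Finite → (0 : Site d) ∉ S →
      Dmu μ g * ((Fintype.card A : ℝ) ^ (2 * d * (2 * g + 1) ^ (d - 1)))⁻¹ ≤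
        condR μ (cyl {(0 : Site d)} x) (cyl S x) := by
  classical
  have hA : Nonempty A := by
    by_contra hA
    rw [not_nonempty_iff] at hA
    have hE : IsEmpty (Site d → A) := ⟨fun y => hA.false (y 0)⟩
    have h1 : μ Set.univ = 1 := measure_univ
    rw [Set.eq_empty_of_isEmpty Set.univ, measure_empty] at h1
    exact zero_ne_one h1
  set K := 2 * d * (2 * g + 1) ^ (d - 1) with hK
  have hcard : 0 < (Fintype.card A : ℝ) := by exact_mod_cast Fintype.card_pos
  have hinvpos : 0 < ((Fintype.card A : ℝ) ^ K)⁻¹ := inv_pos.2 (pow_pos hcard K)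
  refine ⟨mul_pos (Dmu_pos μ g) hinvpos, ?_⟩
  intro x hx S hS h0S
  set B := Bblock d g with hB
  have hBfin := Bblock_finite d g
  have hbdfin := bd_Bblock_finite d g
  set C := bd B \ S with hCdef
  have hCfin : C.Finite := hbdfin.subset Set.diff_subset
  obtain ⟨η, hη⟩ := exists_max_config μ hCfin S x
  have hm1 : 0 < μ (cyl S x) := hx S hS
  have hposSC : 0 < μ (cyl S x ∩ cyl C η) := by
    by_contra hc
    push_neg at hc
    have h0 : μ (cyl S x ∩ cyl C η) = 0 := le_antisymm hc zero_le
    rw [h0, mul_zero] at hη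
    exact absurd (le_antisymm hη zero_le) hm1.ne'
  set δ' : Site d → A := fun p => if p ∈ C then η p else x p with hδ'
  have hcylδ' : cyl (S ∪ C) δ' = cyl S x ∩ cyl C η := by
    rw [cyl_union]
    congr 1
    · exact cyl_congr (fun p hp => if_neg (fun hpc => hpc.2 hp))
    · exact cyl_congr (fun p hp => if_pos hp)
  have hpos' : 0 < μ (cyl (S ∪ C) δ') := by rw [hcylδ']; exact hposSC
  obtain ⟨z1, hz1supp, hz1⟩ := exists_support_ext μ hpos'
  have hz1S : ∀ p ∈ S, z1 p = x p := fun p hp =>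
    (hz1 p (Or.inl hp)).trans (if_neg (fun hpc => hpc.2 hp))
  have hz1C : ∀ p ∈ C, z1 p = η p := fun p hp =>
    (hz1 p (Or.inr hp)).trans (if_pos hp)
  -- TSSM gluing
  have h0B : (0 : Site d) ∈ B := fun i => by simp
  have hfar : ∀ q : Site d, q ∉ B → (g : ℕ) ≤ dist1 0 q := by
    intro q hq
    have hex : ∃ i, ¬ (q i).natAbs ≤ g := by
      by_contra hc; push_neg at hc; exact hq (fun i => hc i)
    obtain ⟨i, hi⟩ := hex
    have hle : ((0 : Site d) i - q i).natAbs ≤ ∑ j, ((0 : Site d) j - q j).natAbs :=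
      Finset.single_le_sum (f := fun j => ((0 : Site d) j - q j).natAbs)
        (fun _ _ => Nat.zero_le _) (Finset.mem_univ i)
    have h0i : ((0 : Site d) i - q i).natAbs = (q i).natAbs := by
      simp
    show g ≤ ∑ j, ((0 : Site d) j - q j).natAbs
    omega
  have hdisj1 : Disjoint ({(0 : Site d)} : Set (Site d)) (S ∩ B) := by
    rw [Set.disjoint_left]
    rintro p rfl hp
    exact h0S hp.1
  have hdisj2 : Disjoint (S ∩ B) ((S \ B) ∪ C) := by
    rw [Set.disjoint_left]
    rintro p hp (hq | hq)
    · exact hq.2 hp.2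
    · exact hq.1.1 hp.2
  have hdisj3 : Disjoint ({(0 : Site d)} : Set (Site d)) ((S \ B) ∪ C) := by
    rw [Set.disjoint_left]
    rintro p rfl (hq | hq)
    · exact hq.2 h0B
    · exact hq.1.1 h0B
  have hdist : ∀ p ∈ ({(0 : Site d)} : Set (Site d)), ∀ q ∈ (S \ B) ∪ C, g ≤ dist1 p q := by
    rintro p rfl q (hq | hq)
    · exact hfar q hq.2
    · exact hfar q hq.1.1
  obtain ⟨z, hzsupp, hzU, hzS, hzV⟩ := htssm {(0 : Site d)} (S ∩ B) ((S \ B) ∪ C)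
    (Set.finite_singleton _) (hS.inter_of_left _) (hS.diff.union hCfin)
    hdisj1 hdisj2 hdisj3 hdist x x z1
    ⟨x, hx, fun p _ => rfl, fun p _ => rfl⟩
    ⟨z1, hz1supp, fun p hp => hz1S p hp.1, fun p _ => rfl⟩
  have hz0 : z 0 = x 0 := hzU 0 rfl
  have hzxS : ∀ p ∈ S, z p = x p := by
    intro p hp
    by_cases hpB : p ∈ B
    · exact hzS p ⟨hp, hpB⟩
    · exact (hzV p (Or.inl ⟨hp, hpB⟩)).trans (hz1S p hp)
  have hzC : ∀ p ∈ C, z p = η p := fun p hp =>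
    (hzV p (Or.inr hp)).trans (hz1C p hp)
  -- the MRF step
  have hWB : B \ S ⊆ Bblock d g := Set.diff_subset
  have hWfin : (B \ S).Finite := hBfin.subset Set.diff_subset
  have hTfin : (S ∪ C).Finite := hS.union hCfin
  have h0W : (0 : Site d) ∈ B \ S := ⟨h0B, h0S⟩
  have hbdWfin : (bd (B \ S)).Finite :=
    (Bblock_finite d (g + 1)).subset (bd_subset_ball hWB)
  have hbdWT : bd (B \ S) ⊆ S ∪ C := by
    rintro p ⟨hpW, q, hqW, hdq⟩
    by_cases hpB : p ∈ B
    · left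
      by_contra hpS
      exact hpW ⟨hpB, hpS⟩
    · by_cases hpS : p ∈ S
      · left; exact hpS
      · right; exact ⟨⟨hpB, q, hqW.1, hdq⟩, hpS⟩
  have hdisjWT : Disjoint (B \ S) (S ∪ C) := by
    rw [Set.disjoint_left]
    rintro p ⟨hpB, hpS⟩ (hp | hp)
    · exact hpS hp
    · exact hp.1.1 hpB
  have hcylT : cyl (S ∪ C) z = cyl S x ∩ cyl C η := by
    rw [cyl_union]
    congr 1
    · exact cyl_congr hzxS
    · exact cyl_congr hzC
  have hm2pos : 0 < μ (cyl (S ∪ C) z) := hzsupp _ hTfin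
  have hmrfeq := hmrf (B \ S) hWfin z (S ∪ C) hTfin hbdWT hdisjWT z hm2pos
  have hbdpos : 0 < μ (cyl (bd (B \ S)) z) := hzsupp _ hbdWfin
  have hnum : 0 < μ (cyl (B \ S) z ∩ cyl (bd (B \ S)) z) := by
    rw [← cyl_union]
    exact hzsupp _ (hWfin.union hbdWfin)
  have hcondpos : 0 < condR μ (cyl (B \ S) z) (cyl (bd (B \ S)) z) := by
    apply ENNReal.toReal_pos
    · exact (ENNReal.div_pos hnum.ne' (measure_ne_top μ _)).ne'
    · exact (ENNReal.div_lt_top (measure_ne_top μ _) hbdpos.ne').ne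
  have hrmem : condR μ (cyl (B \ S) z) (cyl (bd (B \ S)) z) ∈ DmuSet μ g :=
    ⟨B \ S, hWB, z, hbdpos, z, hcondpos, rfl⟩
  have hDle : Dmu μ g ≤ condR μ (cyl (B \ S) z) (cyl (S ∪ C) z) := by
    rw [hmrfeq]
    exact Dmu_le μ hrmem
  -- quantitative chain
  set m1 := μ (cyl S x) with hm1def
  set m2 := μ (cyl (S ∪ C) z) with hm2def
  set m3 := μ (cyl (B \ S) z ∩ cyl (S ∪ C) z) with hm3def
  have hm3pos : 0 < m3 := by
    rw [hm3def, ← cyl_union]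
    exact hzsupp _ (hWfin.union hTfin)
  have hcardE1 : (1 : ℝ≥0∞) ≤ (Fintype.card A : ℝ≥0∞) := by
    exact_mod_cast Nat.one_le_cast.2 Fintype.card_pos
  have hncard : C.ncard ≤ K := by
    rw [hK]
    exact le_trans (Set.ncard_le_ncard Set.diff_subset hbdfin) (card_bd_Bblock d g)
  have hm1m2 : m1 ≤ (Fintype.card A : ℝ≥0∞) ^ K * m2 := by
    rw [hm2def, hcylT]
    refine hη.trans (mul_le_mul_left ?_ _)
    exact pow_le_pow_right₀ hcardE1 hncard
  have hsub3 : cyl (B \ S) z ∩ cyl (S ∪ C) z ⊆ cyl {(0 : Site d)} x ∩ cyl S x := by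
    rintro y ⟨hy1, hy2⟩
    refine ⟨?_, ?_⟩
    · rintro p rfl
      rw [hy1 0 h0W, hz0]
    · intro p hp
      rw [hy2 p (Or.inl hp), hzxS p hp]
  have hNge : m3 ≤ μ (cyl {(0 : Site d)} x ∩ cyl S x) := measure_mono hsub3
  have heq : m3 / m2 * (m2 / m1) = m3 / m1 := by
    rw [div_eq_mul_inv, div_eq_mul_inv, div_eq_mul_inv]
    calc m3 * m2⁻¹ * (m2 * m1⁻¹) = m3 * (m2⁻¹ * m2) * m1⁻¹ := by ring
      _ = m3 * m1⁻¹ := by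
        rw [ENNReal.inv_mul_cancel hm2pos.ne' (measure_ne_top μ _), mul_one]
  have hfrac : m3 / m2 * (m2 / m1) ≤ μ (cyl {(0 : Site d)} x ∩ cyl S x) / m1 := by
    rw [heq]
    exact ENNReal.div_le_div_right hNge _
  have hcK0 : ((Fintype.card A : ℝ≥0∞) ^ K) ≠ 0 :=
    pow_ne_zero K (by exact_mod_cast Nat.cast_ne_zero.2 Fintype.card_pos.ne')
  have hcKtop : ((Fintype.card A : ℝ≥0∞) ^ K) ≠ ∞ := by
    exact ENNReal.pow_ne_top (ENNReal.natCast_ne_top _)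
  have hfrac2 : ((Fintype.card A : ℝ≥0∞) ^ K)⁻¹ ≤ m2 / m1 := by
    have h1 : m2 / ((Fintype.card A : ℝ≥0∞) ^ K * m2) ≤ m2 / m1 :=
      ENNReal.div_le_div_left hm1m2 _
    have h2 : m2 / ((Fintype.card A : ℝ≥0∞) ^ K * m2) = ((Fintype.card A : ℝ≥0∞) ^ K)⁻¹ := by
      rw [div_eq_mul_inv, ENNReal.mul_inv (Or.inl hcK0) (Or.inl hcKtop)]
      calc m2 * (((Fintype.card A : ℝ≥0∞) ^ K)⁻¹ * m2⁻¹)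
          = ((Fintype.card A : ℝ≥0∞) ^ K)⁻¹ * (m2 * m2⁻¹) := by ring
        _ = ((Fintype.card A : ℝ≥0∞) ^ K)⁻¹ := by
            rw [ENNReal.mul_inv_cancel hm2pos.ne' (measure_ne_top μ _), mul_one]
    rw [← h2]
    exact h1
  have hmain : m3 / m2 * ((Fintype.card A : ℝ≥0∞) ^ K)⁻¹ ≤
      μ (cyl {(0 : Site d)} x ∩ cyl S x) / m1 :=
    le_trans (mul_le_mul_right hfrac2 _) hfrac
  have hfin1 : μ (cyl {(0 : Site d)} x ∩ cyl S x) / m1 ≠ ∞ :=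
    (ENNReal.div_lt_top (measure_ne_top μ _) hm1.ne').ne
  have hreal := ENNReal.toReal_mono hfin1 hmain
  rw [ENNReal.toReal_mul] at hreal
  have hid1 : ((((Fintype.card A : ℝ≥0∞) ^ K)⁻¹).toReal) = ((Fintype.card A : ℝ) ^ K)⁻¹ := by
    simp [ENNReal.toReal_inv, ENNReal.toReal_pow]
  rw [hid1] at hreal
  have hfinal : condR μ (cyl (B \ S) z) (cyl (S ∪ C) z) * ((Fintype.card A : ℝ) ^ K)⁻¹ ≤
      condR μ (cyl {(0 : Site d)} x) (cyl S x) := hreal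
  calc Dmu μ g * ((Fintype.card A : ℝ) ^ K)⁻¹
      ≤ condR μ (cyl (B \ S) z) (cyl (S ∪ C) z) * ((Fintype.card A : ℝ) ^ K)⁻¹ :=
        mul_le_mul_of_nonneg_right hDle (le_of_lt hinvpos)
    _ ≤ condR μ (cyl {(0 : Site d)} x) (cyl S x) := hfinal
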